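/- For every γ ≥ 1, the function r ↦ θ_γ(r) is nondecreasing on [0, ∞) and takes values in [0, 1]. -/

import Mathlib

open MeasureTheory ProbabilityTheory Real

/-- The standard Gaussian tail function `Q(a) = (1/√(2π)) ∫_a^∞ e^{−u²/2} du`. -/
noncomputable def Qfun (a : ℝ) : ℝ :=
  (1 / Real.sqrt (2 * Real.pi)) * ∫ u in Set.Ici a, Real.exp (-u ^ 2 / 2)

/-- `θ_γ(r) = Q(log γ / r − r/2) − γ·Q(log γ / r + r/2)` for `r > 0`, with `θ_γ(0) = 0`. -/
noncomputable def thetaGamma (γ r : ℝ) : ℝ :=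
  if r = 0 then 0
  else Qfun (Real.log γ / r - r / 2) - γ * Qfun (Real.log γ / r + r / 2)

namespace ThetaAux

open Set

/-- The (unnormalized) Gaussian density. -/
noncomputable def g (u : ℝ) : ℝ := Real.exp (-u ^ 2 / 2)

lemma g_pos (u : ℝ) : 0 < g u := Real.exp_pos _

lemma g_cont : Continuous g := by
  unfold g; fun_prop

lemma g_eq : g = fun u : ℝ => Real.exp (-(1 / 2 : ℝ) * u ^ 2) := by
  funext u; unfold g; congr 1; ring

lemma g_integrable : Integrable g := by
  rw [g_eq]
  exact integrable_exp_neg_mul_sq (by norm_num)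

lemma integral_g : ∫ u, g u = Real.sqrt (2 * Real.pi) := by
  rw [g_eq]
  rw [integral_gaussian (1 / 2)]
  rw [show Real.pi / (1/2) = 2 * Real.pi by ring]

lemma sqrt_two_pi_pos : 0 < Real.sqrt (2 * Real.pi) :=
  Real.sqrt_pos.2 (by positivity)

lemma Qfun_nonneg (a : ℝ) : 0 ≤ Qfun a :=
  mul_nonneg (by positivity) <|
    setIntegral_nonneg measurableSet_Ici fun u _ => (Real.exp_pos _).le

lemma Qfun_le_one (a : ℝ) : Qfun a ≤ 1 := by
  have h1 : ∫ u in Ici a, g u ≤ ∫ u, g u :=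
    setIntegral_le_integral g_integrable (Filter.Eventually.of_forall fun u => (g_pos u).le)
  have h2 : Qfun a ≤ (1 / Real.sqrt (2 * Real.pi)) * ∫ u, g u :=
    mul_le_mul_of_nonneg_left h1 (by positivity)
  rw [integral_g] at h2
  calc Qfun a ≤ (1 / Real.sqrt (2 * Real.pi)) * Real.sqrt (2 * Real.pi) := h2
    _ = 1 := by field_simp

lemma F_hasDerivAt (a : ℝ) : HasDerivAt (fun x => ∫ u in Iic x, g u) (g a) a := by
  have key : ∀ x : ℝ, ∫ u in Iic x, g u = (∫ u in Iic (0 : ℝ), g u) + ∫ u in (0 : ℝ)..x, g u := by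
    intro x
    rw [← intervalIntegral.integral_Iic_sub_Iic g_integrable.integrableOn
      g_integrable.integrableOn]
    ring
  have h2 : HasDerivAt (fun x => ∫ u in (0 : ℝ)..x, g u) (g a) a :=
    intervalIntegral.integral_hasDerivAt_right (g_integrable.intervalIntegrable)
      (g_cont.stronglyMeasurable.stronglyMeasurableAtFilter) g_cont.continuousAt
  have h3 := h2.const_add (∫ u in Iic (0 : ℝ), g u)
  simpa only [← key] using h3

lemma Qfun_eq (a : ℝ) :
    Qfun a = (1 / Real.sqrt (2 * Real.pi)) * (∫ u, g u)
      - (1 / Real.sqrt (2 * Real.pi)) * ∫ u in Iic a, g u := by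
  have h : (∫ u in Iio a, g u) + ∫ u in Ici a, g u = ∫ u, g u :=
    intervalIntegral.integral_Iio_add_Ici g_integrable.integrableOn g_integrable.integrableOn
  rw [← mul_sub]
  unfold Qfun
  congr 1
  rw [integral_Iic_eq_integral_Iio]
  show ∫ u in Ici a, g u = _
  linarith

lemma Qfun_hasDerivAt (a : ℝ) :
    HasDerivAt Qfun (-((1 / Real.sqrt (2 * Real.pi)) * g a)) a := by
  have h := ((F_hasDerivAt a).const_mul (1 / Real.sqrt (2 * Real.pi))).const_sub
    ((1 / Real.sqrt (2 * Real.pi)) * (∫ u, g u))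
  have : (fun x => (1 / Real.sqrt (2 * Real.pi)) * (∫ u, g u)
      - (1 / Real.sqrt (2 * Real.pi)) * ∫ u in Iic x, g u) = Qfun := by
    funext x; rw [Qfun_eq]
  rw [this] at h
  simpa using h

/-- The key density identity: `γ · g(b) = g(a)` where `a, b = log γ / r ∓ r/2`. -/
lemma density_identity {γ r : ℝ} (hγ : 1 ≤ γ) (hr : 0 < r) :
    γ * g (Real.log γ / r + r / 2) = g (Real.log γ / r - r / 2) := by
  have hγ0 : (0 : ℝ) < γ := lt_of_lt_of_le one_pos hγ
  unfold g
  rw [← Real.exp_log hγ0, ← Real.exp_add]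
  congr 1
  simp only [Real.log_exp]
  field_simp
  ring

lemma aFn_hasDerivAt (L : ℝ) {r : ℝ} (hr : 0 < r) :
    HasDerivAt (fun r : ℝ => L / r - r / 2) (-(L / r ^ 2) - 1 / 2) r := by
  have h1 : HasDerivAt (fun r : ℝ => L / r) (-(L / r ^ 2)) r := by
    have := (hasDerivAt_inv hr.ne').const_mul L
    simpa [div_eq_mul_inv, neg_div, mul_comm, mul_assoc] using this
  have h2 : HasDerivAt (fun r : ℝ => r / 2) (1 / 2) r := by
    simpa using (hasDerivAt_id r).div_const 2
  exact h1.sub h2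

lemma bFn_hasDerivAt (L : ℝ) {r : ℝ} (hr : 0 < r) :
    HasDerivAt (fun r : ℝ => L / r + r / 2) (-(L / r ^ 2) + 1 / 2) r := by
  have h1 : HasDerivAt (fun r : ℝ => L / r) (-(L / r ^ 2)) r := by
    have := (hasDerivAt_inv hr.ne').const_mul L
    simpa [div_eq_mul_inv, neg_div, mul_comm, mul_assoc] using this
  have h2 : HasDerivAt (fun r : ℝ => r / 2) (1 / 2) r := by
    simpa using (hasDerivAt_id r).div_const 2
  exact h1.add h2

/-- On `(0, ∞)` the (un-truncated) theta function has derivative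
`(1/√(2π)) e^{-a(r)²/2} > 0`. -/
lemma theta_hasDerivAt {γ : ℝ} (hγ : 1 ≤ γ) {r : ℝ} (hr : 0 < r) :
    HasDerivAt (fun r => Qfun (Real.log γ / r - r / 2) - γ * Qfun (Real.log γ / r + r / 2))
      ((1 / Real.sqrt (2 * Real.pi)) * g (Real.log γ / r - r / 2)) r := by
  set L := Real.log γ with hL
  set C := 1 / Real.sqrt (2 * Real.pi) with hC
  have hQa := (Qfun_hasDerivAt (L / r - r / 2)).comp r (aFn_hasDerivAt L hr)
  have hQb := ((Qfun_hasDerivAt (L / r + r / 2)).comp r (bFn_hasDerivAt L hr)).const_mul γ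
  have h := hQa.sub hQb
  refine h.congr_deriv (Eq.symm ?_)
  have hid := density_identity hγ hr
  rw [← hL, ← hC] at *
  set ga := g (L / r - r / 2)
  set gb := g (L / r + r / 2)
  show C * ga = -(C * ga) * (-(L / r ^ 2) - 1 / 2) - γ * (-(C * gb) * (-(L / r ^ 2) + 1 / 2))
  have h2 : γ * gb = ga := hid
  linear_combination (C * (L / r ^ 2 - 1 / 2)) * h2

/-- Nonnegativity: `γ Q(b) ≤ Q(a)`. -/
lemma gammaQ_le_Q {γ : ℝ} (hγ : 1 ≤ γ) {r : ℝ} (hr : 0 < r) :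
    γ * Qfun (Real.log γ / r + r / 2) ≤ Qfun (Real.log γ / r - r / 2) := by
  set L := Real.log γ
  set a := L / r - r / 2 with ha
  set b := L / r + r / 2 with hb
  have hγ0 : (0 : ℝ) < γ := lt_of_lt_of_le one_pos hγ
  -- key integral inequality
  have step1 : γ * ∫ u in Ici b, g u ≤ ∫ u in Ici b, g (u - r) := by
    rw [← integral_const_mul]
    refine setIntegral_mono_on ((g_integrable.const_mul γ).integrableOn)
      ((g_integrable.comp_sub_right r).integrableOn) measurableSet_Ici ?_
    intro u hu
    have hu' : b ≤ u := hu
    have hur : L + r ^ 2 / 2 ≤ u * r := by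
      have := mul_le_mul_of_nonneg_right hu' hr.le
      rw [hb] at this
      have hrr : (L / r + r / 2) * r = L + r ^ 2 / 2 := by field_simp
      linarith [hrr ▸ this]
    unfold g
    rw [← Real.exp_log hγ0, ← Real.exp_add]
    apply Real.exp_le_exp.2
    nlinarith
  have step2 : ∫ u in Ici b, g (u - r) = ∫ u in Ici a, g u := by
    have hmp : MeasurePreserving (fun x : ℝ => x + r) volume volume :=
      measurePreserving_add_right volume r
    have hemb : MeasurableEmbedding (fun x : ℝ => x + r) :=
      (MeasurableEquiv.addRight r).measurableEmbedding
    have := hmp.setIntegral_preimage_emb hemb (fun u => g (u - r)) (Ici b)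
    rw [Set.preimage_add_const_Ici] at this
    have hba : b - r = a := by rw [ha, hb]; ring
    rw [hba] at this
    rw [← this]
    congr 1
    funext x
    simp
  have hQa := Qfun_nonneg a
  have hker : γ * ∫ u in Ici b, g u ≤ ∫ u in Ici a, g u := step2 ▸ step1
  have hCpos : (0 : ℝ) ≤ 1 / Real.sqrt (2 * Real.pi) := by positivity
  unfold Qfun
  calc γ * ((1 / Real.sqrt (2 * Real.pi)) * ∫ u in Ici b, Real.exp (-u ^ 2 / 2))
      = (1 / Real.sqrt (2 * Real.pi)) * (γ * ∫ u in Ici b, g u) := by unfold g; ring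
    _ ≤ (1 / Real.sqrt (2 * Real.pi)) * ∫ u in Ici a, g u :=
        mul_le_mul_of_nonneg_left hker hCpos
    _ = (1 / Real.sqrt (2 * Real.pi)) * ∫ u in Ici a, Real.exp (-u ^ 2 / 2) := rfl

end ThetaAux

/-- For every `γ ≥ 1`, the function `r ↦ θ_γ(r)` is nondecreasing on
`[0, ∞)` and takes values in `[0, 1]`. -/
theorem thetaGamma_monotone_mem_Icc (γ : ℝ) (hγ : 1 ≤ γ) :
    MonotoneOn (thetaGamma γ) (Set.Ici 0) ∧
      ∀ r ∈ Set.Ici (0 : ℝ), thetaGamma γ r ∈ Set.Icc (0 : ℝ) 1 := by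
  open ThetaAux in
  have hpos : ∀ r : ℝ, 0 < r →
      thetaGamma γ r = Qfun (Real.log γ / r - r / 2) - γ * Qfun (Real.log γ / r + r / 2) :=
    fun r hr => if_neg hr.ne'
  have hzero : thetaGamma γ 0 = 0 := if_pos rfl
  have hnonneg : ∀ r : ℝ, 0 < r → 0 ≤ thetaGamma γ r := by
    intro r hr
    rw [hpos r hr]
    have := ThetaAux.gammaQ_le_Q hγ hr
    linarith
  have hmonoIoi : StrictMonoOn (thetaGamma γ) (Set.Ioi 0) := by
    have haux : StrictMonoOn
        (fun r => Qfun (Real.log γ / r - r / 2) - γ * Qfun (Real.log γ / r + r / 2))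
        (Set.Ioi 0) := by
      apply strictMonoOn_of_deriv_pos (convex_Ioi 0)
      · intro x hx
        exact (ThetaAux.theta_hasDerivAt hγ (by exact hx : (0:ℝ) < x)).continuousAt.continuousWithinAt
      · intro x hx
        rw [interior_Ioi] at hx
        rw [(ThetaAux.theta_hasDerivAt hγ hx).deriv]
        have := ThetaAux.g_pos (Real.log γ / x - x / 2)
        have := ThetaAux.sqrt_two_pi_pos
        positivity
    intro x hx y hy hxy
    rw [hpos x hx, hpos y hy]
    exact haux hx hy hxy
  constructor
  · intro x hx y hy hxy
    rcases eq_or_lt_of_le hxy with rfl | hlt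
    · exact le_refl _
    · rcases eq_or_lt_of_le (Set.mem_Ici.mp hx : (0:ℝ) ≤ x) with rfl | hx0
      · rw [hzero]
        exact hnonneg y hlt
      · exact (hmonoIoi hx0 (hx0.trans hlt) hlt).le
  · intro r hr
    rcases eq_or_lt_of_le (Set.mem_Ici.mp hr : (0:ℝ) ≤ r) with rfl | hr0
    · rw [hzero]; exact ⟨le_refl _, zero_le_one⟩
    · refine ⟨hnonneg r hr0, ?_⟩
      rw [hpos r hr0]
      have h1 := ThetaAux.Qfun_le_one (Real.log γ / r - r / 2)
      have h2 := ThetaAux.Qfun_nonneg (Real.log γ / r + r / 2)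
      nlinarith
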